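/- arXiv:1509.07008 — 2 statements merged into one kernel-verified Lean document; each statement's English description precedes it below -/
import Mathlib

section
/- Assume |a_j| = 1 for all j = 1,…,n. Then the Laurent polynomial W_{κ,a} satisfies W_{κ,a}† = (−1)^{n(n−1)/2}·W_{κ,a}, where for a Laurent polynomial P(z) = Σ_m c_m z^m one sets P†(z) = Σ_m conj(c_m)·z^{−m}. -/
/-- The derivation `D = z·d/dz` on Laurent polynomials: `D(z^m) = m·z^m`. -/
noncomputable def Dop (P : LaurentPolynomial ℂ) : LaurentPolynomial ℂ :=
  Finsupp.sum P.coeff fun m c => LaurentPolynomial.C ((m : ℂ) * c) * LaurentPolynomial.T m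

/-- `Φ_k(a;z) = a·z^k + a⁻¹·z^{−k}`. -/
noncomputable def PhiL (k : ℕ) (a : ℂ) : LaurentPolynomial ℂ :=
  LaurentPolynomial.C a * LaurentPolynomial.T (k : ℤ) +
    LaurentPolynomial.C a⁻¹ * LaurentPolynomial.T (-(k : ℤ))

/-- `W_{κ,a}`: the determinant of the `n×n` matrix with `(i,j)` entry `D^{i−1}Φ_{k_j}(a_j;z)`. -/
noncomputable def Wka (n : ℕ) (k : Fin n → ℕ) (a : Fin n → ℂ) : LaurentPolynomial ℂ :=
  Matrix.det (Matrix.of fun i j : Fin n => Dop^[(i : ℕ)] (PhiL (k j) (a j)))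

/-- The exceptional Laurent orthogonal polynomial `P_{κ,a;l}`: the determinant of the
`(n+1)×(n+1)` matrix with `(i,j)` entry `D^{i−1}Φ_{k_j}(a_j;z)` for `j ≤ n` and
`D^{i−1}z^l` in the last column. -/
noncomputable def Pka (n : ℕ) (k : Fin n → ℕ) (a : Fin n → ℂ) (l : ℤ) : LaurentPolynomial ℂ :=
  Matrix.det (Matrix.of fun i j : Fin (n + 1) =>
    Fin.lastCases (Dop^[(i : ℕ)] (LaurentPolynomial.T l))
      (fun j' => Dop^[(i : ℕ)] (PhiL (k j') (a j'))) j)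

/-- Evaluation of a Laurent polynomial at `z ∈ ℂ`. -/
noncomputable def evalL (P : LaurentPolynomial ℂ) (z : ℂ) : ℂ :=
  Finsupp.sum P.coeff fun m c => c * z ^ m

/-- The dagger operation: `(Σ c_m z^m)† = Σ conj(c_m)·z^{−m}`. -/
noncomputable def dag (P : LaurentPolynomial ℂ) : LaurentPolynomial ℂ :=
  Finsupp.sum P.coeff fun m c => LaurentPolynomial.C ((starRingEnd ℂ) c) * LaurentPolynomial.T (-m)

/-- The set `Z_κ` of zeros of `W_{κ,a}` in `ℂ\{0}`. -/
def Zka (n : ℕ) (k : Fin n → ℕ) (a : Fin n → ℂ) : Set ℂ :=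
  {z | z ≠ 0 ∧ evalL (Wka n k a) z = 0}

/-- The multiplicity of `z₀ ≠ 0` as a zero of the Laurent polynomial `W`, computed as the
root multiplicity of `z₀` in a polynomial representative `f'` with `toLaurent f' = W · T^d`. -/
noncomputable def multL (W : LaurentPolynomial ℂ) (z₀ : ℂ) : ℕ :=
  Polynomial.rootMultiplicity z₀ (W.exists_T_pow).choose_spec.choose

/-- `ψ` is quasi-invariant at `x₀` with multiplicity `m`: `(x−x₀)^m·ψ(x)` extends
analytically across `x₀` and all its odd-order derivatives of orders `1,3,…,2m−1`
vanish at `x₀`. -/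
def QuasiInv (ψ : ℂ → ℂ) (x₀ : ℂ) (m : ℕ) : Prop :=
  ∃ F : ℂ → ℂ, AnalyticAt ℂ F x₀ ∧
    (∀ᶠ x in nhdsWithin x₀ {x₀}ᶜ, F x = (x - x₀) ^ m * ψ x) ∧
    ∀ j : ℕ, 1 ≤ j → j ≤ m → iteratedDeriv (2 * j - 1) F x₀ = 0

/-- `Q_κ`: Laurent polynomials `P` such that `Φ(x) = P(e^{ix})/W_{κ,a}(e^{ix})` is
quasi-invariant at every point `x_j ∈ ℂ` with `e^{ix_j} ∈ Z_κ`, with the multiplicity of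
the corresponding zero. -/
def Qka (n : ℕ) (k : Fin n → ℕ) (a : Fin n → ℂ) : Set (LaurentPolynomial ℂ) :=
  {P | ∀ x₀ : ℂ, Complex.exp (Complex.I * x₀) ∈ Zka n k a →
    QuasiInv (fun x => evalL P (Complex.exp (Complex.I * x)) /
        evalL (Wka n k a) (Complex.exp (Complex.I * x))) x₀
      (multL (Wka n k a) (Complex.exp (Complex.I * x₀)))}

/-- `Q_{κ,C}`: as `Q_κ`, but quasi-invariance is required only at real points `x_j ∈ ℝ`. -/
def QkaC (n : ℕ) (k : Fin n → ℕ) (a : Fin n → ℂ) : Set (LaurentPolynomial ℂ) :=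
  {P | ∀ x₀ : ℝ, Complex.exp (Complex.I * (x₀ : ℂ)) ∈ Zka n k a →
    QuasiInv (fun x => evalL P (Complex.exp (Complex.I * x)) /
        evalL (Wka n k a) (Complex.exp (Complex.I * x))) (x₀ : ℂ)
      (multL (Wka n k a) (Complex.exp (Complex.I * (x₀ : ℂ))))}

/-- `μ > 0` is admissible for the bilinear form if `μ ≠ |z_i|` for every zero `z_i ∈ Z_κ`. -/
def AdmMu (n : ℕ) (k : Fin n → ℕ) (a : Fin n → ℂ) (μ : ℝ) : Prop :=
  0 < μ ∧ ∀ z ∈ Zka n k a, μ ≠ ‖z‖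

/-- The complex bilinear form `(P,Q) = (1/2πi)·∮_{|z|=μ} P(z)·Q(z)·W_{κ,a}(z)^{−2}·dz/z`. -/
noncomputable def formB (n : ℕ) (k : Fin n → ℕ) (a : Fin n → ℂ) (μ : ℝ)
    (P Q : LaurentPolynomial ℂ) : ℂ :=
  (2 * Real.pi * Complex.I)⁻¹ *
    ∮ z in C(0, μ), evalL P z * evalL Q z / ((evalL (Wka n k a) z) ^ 2 * z)

/-- `μ > 0` is admissible for the Hermitian form if `1 < max(μ, 1/μ) < ν`, where
`ν = min{|z_i| : z_i ∈ Z_κ, |z_i| > 1}` (`ν = +∞` if no such zero exists). -/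
def AdmMuH (n : ℕ) (k : Fin n → ℕ) (a : Fin n → ℂ) (μ : ℝ) : Prop :=
  0 < μ ∧ 1 < max μ μ⁻¹ ∧
    ∀ z ∈ Zka n k a, 1 < ‖z‖ → max μ μ⁻¹ < ‖z‖

/-- The sesquilinear product
`⟨P,Q⟩_L = (1/2πi)·∮_{|z|=μ} P(z)·Q†(z)·(W_{κ,a}(z)·W_{κ,a}†(z))⁻¹·dz/z`. -/
noncomputable def formH (n : ℕ) (k : Fin n → ℕ) (a : Fin n → ℂ) (μ : ℝ)
    (P Q : LaurentPolynomial ℂ) : ℂ :=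
  (2 * Real.pi * Complex.I)⁻¹ *
    ∮ z in C(0, μ), evalL P z * evalL (dag Q) z /
      (evalL (Wka n k a) z * evalL (dag (Wka n k a)) z * z)


open LaurentPolynomial Finsupp in
lemma dag_single (m : ℤ) (c : ℂ) :
    dag (AddMonoidAlgebra.single m c) = AddMonoidAlgebra.single (-m) ((starRingEnd ℂ) c) := by
  rw [dag, AddMonoidAlgebra.coeff_single, Finsupp.sum_single_index (by simp), single_eq_C_mul_T]

open LaurentPolynomial in
lemma Dop_single (m : ℤ) (c : ℂ) :
    Dop (AddMonoidAlgebra.single m c) = AddMonoidAlgebra.single m ((m : ℂ) * c) := by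
  rw [Dop, AddMonoidAlgebra.coeff_single, Finsupp.sum_single_index (by simp), single_eq_C_mul_T]

lemma dag_add (P Q : LaurentPolynomial ℂ) : dag (P + Q) = dag P + dag Q := by
  unfold dag; rw [AddMonoidAlgebra.coeff_add]; exact Finsupp.sum_add_index' (by simp) (by intro i b c; simp [map_add, add_mul])

lemma Dop_add (P Q : LaurentPolynomial ℂ) : Dop (P + Q) = Dop P + Dop Q := by
  unfold Dop; rw [AddMonoidAlgebra.coeff_add]; exact Finsupp.sum_add_index' (by simp) (by intro i b c; simp [mul_add, add_mul])

lemma dag_mul (P Q : LaurentPolynomial ℂ) : dag (P * Q) = dag P * dag Q := by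
  induction P using LaurentPolynomial.induction_on' with
  | add p q hp hq => simp [add_mul, dag_add, hp, hq]
  | C_mul_T n c =>
    induction Q using LaurentPolynomial.induction_on' with
    | add p q hp hq => simp [mul_add, dag_add, hp, hq]
    | C_mul_T m b =>
      rw [← LaurentPolynomial.single_eq_C_mul_T, ← LaurentPolynomial.single_eq_C_mul_T,
        AddMonoidAlgebra.single_mul_single, dag_single, dag_single, dag_single,
        AddMonoidAlgebra.single_mul_single, neg_add, map_mul]

/-- `dag` as a ring homomorphism. -/
noncomputable def dagRH : LaurentPolynomial ℂ →+* LaurentPolynomial ℂ where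
  toFun := dag
  map_one' := by
    have : (1 : LaurentPolynomial ℂ) = AddMonoidAlgebra.single 0 1 := rfl
    rw [this, dag_single]; simp
  map_mul' := dag_mul
  map_zero' := by simp [dag]
  map_add' := dag_add

lemma Dop_neg (P : LaurentPolynomial ℂ) : Dop (-P) = -Dop P := by
  have h := Dop_add P (-P)
  simp only [add_neg_cancel] at h
  have h0 : Dop (0 : LaurentPolynomial ℂ) = 0 := by simp [Dop]
  rw [h0] at h
  exact eq_neg_of_add_eq_zero_left (by rw [add_comm]; exact h.symm)

lemma Dop_iter_neg (i : ℕ) (P : LaurentPolynomial ℂ) :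
    Dop^[i] (-P) = -Dop^[i] P := by
  induction i generalizing P with
  | zero => simp
  | succ i ih => rw [Function.iterate_succ_apply, Function.iterate_succ_apply, Dop_neg, ih]

lemma dag_Dop (P : LaurentPolynomial ℂ) : dag (Dop P) = -Dop (dag P) := by
  induction P using LaurentPolynomial.induction_on' with
  | add p q hp hq => rw [Dop_add, dag_add, hp, hq, dag_add, Dop_add, neg_add]
  | C_mul_T n c =>
    rw [← LaurentPolynomial.single_eq_C_mul_T, Dop_single, dag_single, dag_single, Dop_single,
      ← AddMonoidAlgebra.single_neg]
    congr 1
    rw [map_mul, map_intCast]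
    push_cast
    ring

lemma dag_Dop_iter (i : ℕ) (P : LaurentPolynomial ℂ) :
    dag (Dop^[i] P) = (-1 : LaurentPolynomial ℂ) ^ i * Dop^[i] (dag P) := by
  induction i generalizing P with
  | zero => simp
  | succ i ih =>
    rw [Function.iterate_succ_apply, ih, dag_Dop, Function.iterate_succ_apply,
      Dop_iter_neg, pow_succ]
    ring

lemma dag_PhiL (k : ℕ) (a : ℂ) (ha : ‖a‖ = 1) : dag (PhiL k a) = PhiL k a := by
  have ha0 : a ≠ 0 := by intro h; simp [h] at ha
  have hconj : (starRingEnd ℂ) a = a⁻¹ := by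
    field_simp
    rw [mul_comm, Complex.mul_conj]
    norm_cast
    rw [← Complex.sq_norm, ha]; norm_num
  have hconj' : (starRingEnd ℂ) a⁻¹ = a := by
    rw [map_inv₀, hconj, inv_inv]
  rw [PhiL, ← LaurentPolynomial.single_eq_C_mul_T, ← LaurentPolynomial.single_eq_C_mul_T,
    dag_add, dag_single, dag_single, hconj, hconj', neg_neg]
  exact add_comm _ _

/-- if `|a_j| = 1` for all `j`, then `W_{κ,a}† = (−1)^{n(n−1)/2}·W_{κ,a}`. -/
theorem stmt_11 (n : ℕ) (k : Fin n → ℕ) (hk : StrictAnti k) (hkpos : ∀ j, 0 < k j)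
    (a : Fin n → ℂ) (ha : ∀ j, ‖a j‖ = 1) :
    dag (Wka n k a) = LaurentPolynomial.C ((-1 : ℂ) ^ (n * (n - 1) / 2)) * Wka n k a := by
  have key : dag (Wka n k a) =
      Matrix.det (Matrix.of fun i j : Fin n =>
        ((-1 : LaurentPolynomial ℂ) ^ (i : ℕ)) *
          (Matrix.of fun i j : Fin n => Dop^[(i : ℕ)] (PhiL (k j) (a j))) i j) := by
    show dagRH _ = _
    rw [Wka, RingHom.map_det]
    refine congrArg Matrix.det (Matrix.ext fun i j => ?_)
    simp only [RingHom.mapMatrix_apply, Matrix.map_apply, Matrix.of_apply]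
    show dag _ = _
    rw [dag_Dop_iter, dag_PhiL _ _ (ha j)]
  rw [key, Matrix.det_mul_column, ← Wka]
  congr 1
  rw [Finset.prod_pow_eq_pow_sum, Fin.sum_univ_eq_sum_range (fun i => i) n,
    Finset.sum_range_id]
  simp [map_pow]
end

section
/- The complex bilinear form (·,·) is non-degenerate on Q_κ: if P ∈ Q_κ satisfies (P,Q) = 0 for all Q ∈ Q_κ, then P = 0. (Combined with the facts that the codimension of U_κ in Q_κ is n and the radical of the form restricted to U_κ has dimension n, this says that Q_κ is the minimal complex Euclidean extension of U_κ.) -/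
open LaurentPolynomial Complex

/-! ### Auxiliary lemmas -/

/-- Evaluation at a unit as an algebra homomorphism. -/
noncomputable def evalHomL (z : ℂˣ) : LaurentPolynomial ℂ →ₐ[ℂ] ℂ :=
  AddMonoidAlgebra.lift ℂ ℂ ℤ ((Units.coeHom ℂ).comp (zpowersHom ℂˣ z))

lemma evalL_eq_hom (P : LaurentPolynomial ℂ) (z : ℂˣ) : evalL P (z : ℂ) = evalHomL z P := by
  rw [evalHomL, AddMonoidAlgebra.lift_apply, evalL]
  refine Finsupp.sum_congr fun m _ => ?_
  simp [smul_eq_mul, ← Units.val_zpow_eq_zpow_val]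

lemma evalL_mul {z : ℂ} (hz : z ≠ 0) (P Q : LaurentPolynomial ℂ) :
    evalL (P * Q) z = evalL P z * evalL Q z := by
  have h : z = ((Units.mk0 z hz : ℂˣ) : ℂ) := rfl
  rw [h, evalL_eq_hom, evalL_eq_hom, evalL_eq_hom, map_mul]

lemma evalL_T (z : ℂ) (m : ℤ) : evalL (T m) z = z ^ m := by
  rw [evalL]
  show Finsupp.sum (Finsupp.single m (1 : ℂ)) (fun m c => c * z ^ m) = z ^ m
  rw [Finsupp.sum_single_index (by simp), one_mul]

lemma evalL_toLaurent (f : Polynomial ℂ) {z : ℂ} (hz : z ≠ 0) :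
    evalL (Polynomial.toLaurent f) z = Polynomial.eval z f := by
  set u : ℂˣ := Units.mk0 z hz with hu
  have key : (evalHomL u).comp Polynomial.toLaurentAlg = Polynomial.aeval z := by
    apply Polynomial.algHom_ext
    rw [AlgHom.comp_apply]
    have h1 : (Polynomial.toLaurentAlg (Polynomial.X : Polynomial ℂ)) = T 1 := by
      rw [Polynomial.toLaurentAlg_apply, Polynomial.toLaurent_X]
    rw [h1]
    have : evalHomL u (T 1) = evalL (T 1) (u : ℂ) := (evalL_eq_hom _ u).symm
    rw [this, evalL_T]
    simp [hu]
  have h2 : z = ((u : ℂˣ) : ℂ) := rfl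
  calc evalL (Polynomial.toLaurent f) z = evalHomL u (Polynomial.toLaurentAlg f) := by
        rw [h2, evalL_eq_hom]; rfl
    _ = Polynomial.aeval z f := by rw [← AlgHom.comp_apply, key]
    _ = Polynomial.eval z f := by rw [← Polynomial.coe_aeval_eq_eval]

/-- Vanishing of low-order derivatives of `(x-x₀)^N * u x` at `x₀`. -/
lemma iteratedDeriv_pow_mul_eq_zero (x₀ : ℂ) :
    ∀ (r N : ℕ) (u : ℂ → ℂ), AnalyticAt ℂ u x₀ → r < N →
      iteratedDeriv r (fun x => (x - x₀) ^ N * u x) x₀ = 0 := by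
  intro r
  induction r with
  | zero =>
    intro N u hu hN
    simp [iteratedDeriv_zero, sub_self, zero_pow (by omega : N ≠ 0)]
  | succ r ih =>
    intro N u hu hN
    obtain ⟨M, rfl⟩ : ∃ M, N = M + 1 := ⟨N - 1, by omega⟩
    rw [iteratedDeriv_succ']
    have hud : AnalyticAt ℂ (deriv u) x₀ := by
      obtain ⟨s, hs, hall⟩ := hu.eventually_analyticAt.exists_mem
      exact (AnalyticOnNhd.deriv (fun y hy => hall y hy)) x₀ (mem_of_mem_nhds hs)
    have hev : deriv (fun x => (x - x₀) ^ (M + 1) * u x) =ᶠ[nhds x₀]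
        fun x => (x - x₀) ^ M * (((M : ℂ) + 1) * u x + (x - x₀) * deriv u x) := by
      filter_upwards [hu.eventually_analyticAt] with x hx
      have h1 : HasDerivAt (fun y : ℂ => (y - x₀) ^ (M + 1))
          ((((M : ℕ) + 1 : ℕ) : ℂ) * (x - x₀) ^ M * 1) x := by
        simpa using ((hasDerivAt_id x).sub_const x₀).fun_pow (M + 1)
      have h2 : HasDerivAt u (deriv u x) x := hx.differentiableAt.hasDerivAt
      rw [(h1.fun_mul h2).deriv]
      push_cast
      ring
    rw [hev.iteratedDeriv_eq r]
    refine ih M _ ?_ (by omega)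
    exact ((analyticAt_const.mul hu).add
      (((analyticAt_id).sub analyticAt_const).mul hud))

/-- A circle integral of a finite sum equals the sum of circle integrals. -/
lemma circleIntegral_finset_sum {ι : Type*} (s : Finset ι) (f : ι → ℂ → ℂ) {c : ℂ} {R : ℝ}
    (h : ∀ i ∈ s, CircleIntegrable (f i) c R) :
    (∮ z in C(c, R), ∑ i ∈ s, f i z) = ∑ i ∈ s, ∮ z in C(c, R), f i z := by
  simp only [circleIntegral, Finset.smul_sum]
  rw [intervalIntegral.integral_finset_sum]
  intro i hi
  exact (circleIntegrable_iff R).mp (h i hi)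

lemma sphere_ne_zero {μ : ℝ} (hμ : 0 < μ) {z : ℂ} (hz : z ∈ Metric.sphere (0 : ℂ) μ) :
    z ≠ 0 := by
  intro h
  rw [mem_sphere_iff_norm, h, sub_zero, norm_zero] at hz
  exact hμ.ne hz

/-- The circle integral of a Laurent polynomial picks out the coefficient of `z⁻¹`. -/
lemma circleIntegral_evalL (P : LaurentPolynomial ℂ) {μ : ℝ} (hμ : 0 < μ) :
    (∮ z in C(0, μ), evalL P z) = (2 * Real.pi * Complex.I) * P.coeff (-1) := by
  have hker : ∀ m : ℤ, (∮ z in C(0, μ), z ^ m) =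
      if m = -1 then (2 * Real.pi * Complex.I) else 0 := by
    intro m
    have hzw : (fun z : ℂ => z ^ m) = fun z : ℂ => (z - 0) ^ m := by
      funext z; rw [sub_zero]
    by_cases hm : m = -1
    · subst hm
      rw [if_pos rfl, hzw]
      have : (fun z : ℂ => (z - 0) ^ (-1 : ℤ)) = fun z : ℂ => (z - 0)⁻¹ := by
        funext z; rw [zpow_neg_one]
      rw [this]
      exact circleIntegral.integral_sub_inv_of_mem_ball (Metric.mem_ball_self hμ)
    · rw [if_neg hm, hzw]
      exact circleIntegral.integral_sub_zpow_of_ne hm 0 0 μ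
  have hint : ∀ m : ℤ, CircleIntegrable (fun z : ℂ => P.coeff m * z ^ m) 0 μ := by
    intro m
    refine ContinuousOn.circleIntegrable hμ.le ?_
    refine continuousOn_const.mul (ContinuousOn.zpow₀ continuousOn_id m fun z hz => ?_)
    exact Or.inl (sphere_ne_zero hμ hz)
  have h1 : (∮ z in C(0, μ), evalL P z)
      = ∑ m ∈ P.coeff.support, ∮ z in C(0, μ), P.coeff m * z ^ m := by
    rw [← circleIntegral_finset_sum P.coeff.support _ (fun m _ => hint m)]
    rfl
  rw [h1]
  have h2 : ∀ m ∈ P.coeff.support, (∮ z in C(0, μ), P.coeff m * z ^ m)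
      = if m = -1 then (2 * Real.pi * Complex.I) * P.coeff (-1) else 0 := by
    intro m _
    rw [circleIntegral.integral_const_mul, hker m]
    by_cases hm : m = -1
    · subst hm; rw [if_pos rfl, if_pos rfl]; ring
    · rw [if_neg hm, if_neg hm, mul_zero]
  rw [Finset.sum_congr rfl h2, Finset.sum_ite_eq' P.coeff.support (-1)
    (fun _ => (2 * Real.pi * Complex.I) * P.coeff (-1))]
  by_cases hmem : (-1 : ℤ) ∈ P.coeff.support
  · rw [if_pos hmem]
  · rw [if_neg hmem]
    rw [Finsupp.notMem_support_iff] at hmem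
    rw [hmem, mul_zero]

/-- `W² · T l` belongs to `Q_κ`. -/
lemma W2T_mem_Qka (n : ℕ) (k : Fin n → ℕ) (a : Fin n → ℂ) (l : ℤ) :
    (Wka n k a) ^ 2 * T l ∈ Qka n k a := by
  intro x₀ _
  set W := Wka n k a with hW
  set z₀ : ℂ := Complex.exp (Complex.I * x₀) with hz₀def
  set m : ℕ := multL W z₀ with hm
  set d : ℕ := (W.exists_T_pow).choose with hd
  set f' : Polynomial ℂ := (W.exists_T_pow).choose_spec.choose with hf'def
  have hf' : Polynomial.toLaurent f' = W * T (d : ℤ) := (W.exists_T_pow).choose_spec.choose_spec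
  have hmrm : m = Polynomial.rootMultiplicity z₀ f' := rfl
  obtain ⟨q, hq⟩ := Polynomial.pow_rootMultiplicity_dvd f' z₀
  rw [← hmrm] at hq
  set e : ℂ → ℂ := fun x => Complex.exp (Complex.I * x) with he_def
  have he : AnalyticAt ℂ e x₀ := (analyticAt_const.mul analyticAt_id).cexp
  have he0 : ∀ x : ℂ, e x ≠ 0 := fun x => Complex.exp_ne_zero _
  -- dslope factor
  set v : ℂ → ℂ := dslope e x₀ with hv_def
  have hv : AnalyticAt ℂ v x₀ := by
    obtain ⟨p, hp⟩ := he
    exact (hp.has_fpower_series_dslope_fslope).analyticAt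
  have hve : ∀ x : ℂ, e x - z₀ = (x - x₀) * v x := by
    intro x
    have h := sub_smul_dslope e x₀ x
    rw [smul_eq_mul] at h
    rw [← h]
  -- evalL W in terms of f'
  have hWf : ∀ {z : ℂ}, z ≠ 0 → Polynomial.eval z f' = evalL W z * z ^ (d : ℤ) := by
    intro z hz
    rw [← evalL_toLaurent f' hz, hf', evalL_mul hz, evalL_T]
  -- the analytic witness
  set u : ℂ → ℂ := fun x =>
      v x ^ m * Polynomial.eval (e x) q * Complex.exp (((l : ℂ) - (d : ℤ)) * (Complex.I * x))
    with hu_def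
  have hu : AnalyticAt ℂ u x₀ := by
    have h1 : AnalyticAt ℂ (fun x => Polynomial.eval (e x) q) x₀ := by
      have := he.aeval_polynomial q
      simpa [Polynomial.coe_aeval_eq_eval] using this
    exact ((hv.pow m).mul h1).mul ((analyticAt_const.mul (analyticAt_const.mul analyticAt_id)).cexp)
  refine ⟨fun x => (x - x₀) ^ (2 * m) * u x, (((analyticAt_id).sub analyticAt_const).pow _).mul hu,
    ?_, ?_⟩
  · -- eventual equality (in fact everywhere)
    refine Filter.Eventually.filter_mono nhdsWithin_le_nhds (Filter.Eventually.of_forall ?_)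
    intro x
    have hz : e x ≠ 0 := he0 x
    have hGf : evalL W (e x) = (x - x₀) ^ m * v x ^ m * Polynomial.eval (e x) q
        * (e x) ^ (-(d : ℤ)) := by
      have h1 := hWf hz
      have h2 : Polynomial.eval (e x) f'
          = (x - x₀) ^ m * v x ^ m * Polynomial.eval (e x) q := by
        rw [hq, Polynomial.eval_mul, Polynomial.eval_pow, Polynomial.eval_sub,
          Polynomial.eval_X, Polynomial.eval_C, hve x, mul_pow]
      have h3 : (e x) ^ (d : ℤ) ≠ 0 := zpow_ne_zero _ hz
      field_simp [zpow_neg] at h1 ⊢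
      rw [← h2, h1]
      rw [mul_assoc, ← zpow_add₀ hz, add_neg_cancel, zpow_zero, mul_one]
    have hTl : evalL (W ^ 2 * T l) (e x) = (evalL W (e x)) ^ 2 * (e x) ^ l := by
      rw [evalL_mul hz, evalL_T, pow_two, evalL_mul hz, ← pow_two]
    have hexp : Complex.exp (((l : ℂ) - (d : ℤ)) * (Complex.I * x))
        = (e x) ^ (l - (d : ℤ)) := by
      have := Complex.exp_int_mul (Complex.I * x) (l - (d : ℤ))
      rw [← this]
      push_cast
      ring_nf
    show (x - x₀) ^ (2 * m) * u x
        = (x - x₀) ^ m * (evalL (W ^ 2 * T l) (e x) / evalL W (e x))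
    rw [hTl]
    by_cases hG : evalL W (e x) = 0
    · have : (x - x₀) ^ m * v x ^ m * Polynomial.eval (e x) q = 0 := by
        have h3 : (e x) ^ (-(d : ℤ)) ≠ 0 := zpow_ne_zero _ hz
        have := hGf
        rw [hG] at this
        exact by
          rcases mul_eq_zero.mp this.symm with h | h
          · exact h
          · exact absurd h h3
      rw [hG, hu_def]
      simp only [zero_pow, ne_eq]
      have : (x - x₀) ^ (2 * m) * (v x ^ m * Polynomial.eval (e x) q
          * Complex.exp (((l : ℂ) - (d : ℤ)) * (Complex.I * x))) = 0 := by
        rw [two_mul, pow_add]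
        calc (x - x₀) ^ m * (x - x₀) ^ m * (v x ^ m * Polynomial.eval (e x) q
            * Complex.exp (((l : ℂ) - (d : ℤ)) * (Complex.I * x)))
            = ((x - x₀) ^ m * v x ^ m * Polynomial.eval (e x) q) * ((x - x₀) ^ m
            * Complex.exp (((l : ℂ) - (d : ℤ)) * (Complex.I * x))) := by ring
          _ = 0 := by rw [this, zero_mul]
      rw [this]
      simp
    · have hGg : (evalL W (e x)) ^ 2 * (e x) ^ l / evalL W (e x)
          = evalL W (e x) * (e x) ^ l := by
        field_simp
      rw [hGg]
      have hsplit : (e x) ^ (l - (d : ℤ)) = (e x) ^ l * (e x) ^ (-(d : ℤ)) := by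
        rw [← zpow_add₀ hz, sub_eq_add_neg]
      simp only [hu_def]
      rw [hexp, hsplit, hGf]
      ring
  · -- odd derivatives vanish
    intro j hj1 hjm
    exact iteratedDeriv_pow_mul_eq_zero x₀ (2 * j - 1) (2 * m) u hu (by omega)


/-- the bilinear form `(·,·)` is non-degenerate on `Q_κ`: if `P ∈ Q_κ` is
orthogonal to every `Q ∈ Q_κ`, then `P = 0`. -/
theorem stmt_16 (n : ℕ) (k : Fin n → ℕ) (hk : StrictAnti k) (hkpos : ∀ j, 0 < k j)
    (a : Fin n → ℂ) (ha : ∀ j, a j ≠ 0)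
    (P : LaurentPolynomial ℂ) (hP : P ∈ Qka n k a) (μ : ℝ) (hμ : AdmMu n k a μ)
    (horth : ∀ Q ∈ Qka n k a, formB n k a μ P Q = 0) :
    P = 0 := by
  obtain ⟨hμ0, hμZ⟩ := hμ
  set W := Wka n k a with hWdef
  have hsphere : ∀ z ∈ Metric.sphere (0 : ℂ) μ, z ≠ 0 ∧ evalL W z ≠ 0 := by
    intro z hz
    have hz0 : z ≠ 0 := sphere_ne_zero hμ0 hz
    refine ⟨hz0, fun hWz => ?_⟩
    have hmem : z ∈ Zka n k a := ⟨hz0, hWz⟩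
    have habs : ‖z‖ = μ := by
      rw [mem_sphere_iff_norm, sub_zero] at hz
      exact hz
    exact hμZ z hmem habs.symm
  have hcoeff : ∀ l : ℤ, P.coeff (-l) = 0 := by
    intro l
    have hQ : W ^ 2 * T l ∈ Qka n k a := W2T_mem_Qka n k a l
    have h0 := horth _ hQ
    rw [formB] at h0
    have hcongr : (∮ z in C(0, μ), evalL P z * evalL (W ^ 2 * T l) z /
        ((evalL W z) ^ 2 * z)) = ∮ z in C(0, μ), evalL (P * T (l - 1)) z := by
      refine circleIntegral.integral_congr hμ0.le fun z hz => ?_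
      obtain ⟨hz0, hWz⟩ := hsphere z hz
      have h1 : evalL (W ^ 2 * T l) z = (evalL W z) ^ 2 * z ^ l := by
        rw [evalL_mul hz0, evalL_T, pow_two, evalL_mul hz0, ← pow_two]
      have h2 : evalL (P * T (l - 1)) z = evalL P z * z ^ (l - 1) := by
        rw [evalL_mul hz0, evalL_T]
      have h3 : z ^ l = z ^ (l - 1) * z := by
        rw [← zpow_add_one₀ hz0, sub_add_cancel]
      show evalL P z * evalL (W ^ 2 * T l) z / ((evalL W z) ^ 2 * z)
          = evalL (P * T (l - 1)) z
      rw [h1, h2, h3]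
      field_simp
    rw [hcongr, circleIntegral_evalL _ hμ0] at h0
    have hne : (2 * (Real.pi : ℂ) * Complex.I) ≠ 0 := by
      simp [Real.pi_ne_zero, Complex.I_ne_zero]
    have h4 : (P * T (l - 1) : LaurentPolynomial ℂ).coeff (-1) = 0 := by
      field_simp at h0
      exact h0
    have h5 : (P * T (l - 1) : LaurentPolynomial ℂ).coeff (-1) = P.coeff (-1 - (l - 1)) := by
      have := AddMonoidAlgebra.coeff_mul_single_apply P (1 : ℂ) (l - 1) (-1)
      simpa [sub_eq_add_neg, add_comm] using this
    rw [h5] at h4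
    have : (-1 : ℤ) - (l - 1) = -l := by ring
    rwa [this] at h4
  ext m
  have := hcoeff (-m)
  rwa [neg_neg] at this
end
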